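/- Assume n ≥ 2. Let r0 > 0, set a0 = r0²·(pᵀQ⁻¹p)⁻¹ and x0 = (a0/r0)·Q⁻¹p. Then for a ∈ ℝ: if a = a0, then Q_a ∩ h_{r0} = {x0}; if a > a0, then Q_a ∩ h_{r0} is nonempty and contains more than one point (it is an ellipsoid in the hyperplane h_{r0} with center x0); and if a < a0, then Q_a ∩ h_{r0} is empty. -/

import Mathlib

open Matrix

/-- with n ≥ 2, r0 > 0, a0 = r0²(pᵀQ⁻¹p)⁻¹ and x0 = (a0/r0)·Q⁻¹p:
if a = a0 then Q_a ∩ h_{r0} = {x0}; if a > a0 then Q_a ∩ h_{r0} is nonempty with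
more than one point; if a < a0 then Q_a ∩ h_{r0} = ∅. -/
theorem markowitz_trace_on_hyperplane_trichotomy {n : ℕ} (hn : 2 ≤ n)
    (Q : Matrix (Fin n) (Fin n) ℝ) (hQ : Q.PosDef)
    (p : Fin n → ℝ) (hp : p ≠ 0)
    (r0 : ℝ) (hr0 : 0 < r0)
    (a : ℝ) :
    (a = r0 ^ 2 * (p ⬝ᵥ Q⁻¹.mulVec p)⁻¹ →
      {x : Fin n → ℝ | x ⬝ᵥ Q.mulVec x = a ∧ p ⬝ᵥ x = r0}
        = {((r0 ^ 2 * (p ⬝ᵥ Q⁻¹.mulVec p)⁻¹) / r0) • Q⁻¹.mulVec p}) ∧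
    (a > r0 ^ 2 * (p ⬝ᵥ Q⁻¹.mulVec p)⁻¹ →
      {x : Fin n → ℝ | x ⬝ᵥ Q.mulVec x = a ∧ p ⬝ᵥ x = r0}.Nonempty ∧
      {x : Fin n → ℝ | x ⬝ᵥ Q.mulVec x = a ∧ p ⬝ᵥ x = r0}.Nontrivial) ∧
    (a < r0 ^ 2 * (p ⬝ᵥ Q⁻¹.mulVec p)⁻¹ →
      {x : Fin n → ℝ | x ⬝ᵥ Q.mulVec x = a ∧ p ⬝ᵥ x = r0} = ∅) := by
  classical
  have hQs : Qᵀ = Q := hQ.isHermitian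
  set q : Fin n → ℝ := Q⁻¹.mulVec p with hqdef
  set c : ℝ := p ⬝ᵥ q with hcdef
  have hc : 0 < c := by
    have := hQ.inv.dotProduct_mulVec_pos (x := p) (by simpa using hp)
    simpa using this
  have hQq : Q.mulVec q = p := by
    rw [hqdef, Matrix.mulVec_mulVec, Matrix.mul_nonsing_inv _ hQ.det_pos.ne'.isUnit,
      Matrix.one_mulVec]
  have hsym : ∀ x y : Fin n → ℝ, x ⬝ᵥ Q.mulVec y = y ⬝ᵥ Q.mulVec x := by
    intro x y
    rw [Matrix.dotProduct_mulVec, ← Matrix.mulVec_transpose, hQs, dotProduct_comm]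
  set a0 : ℝ := r0 ^ 2 * c⁻¹ with ha0def
  have ha0pos : 0 < a0 := by positivity
  set x0 : Fin n → ℝ := (a0 / r0) • q with hx0def
  have hcoef : a0 / r0 = r0 / c := by
    field_simp [ha0def]; rw [ha0def]; field_simp
  have hqQx : ∀ x : Fin n → ℝ, q ⬝ᵥ Q.mulVec x = p ⬝ᵥ x := by
    intro x
    rw [hsym, ← hQq, dotProduct_comm]
  have hx0r : p ⬝ᵥ x0 = r0 := by
    rw [hx0def, dotProduct_smul, hcoef, ← hcdef, smul_eq_mul]
    field_simp
  have hx0Qx : ∀ x : Fin n → ℝ, x0 ⬝ᵥ Q.mulVec x = (r0 / c) * (p ⬝ᵥ x) := by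
    intro x
    rw [hx0def, smul_dotProduct, hcoef, hqQx]
    simp [smul_eq_mul]
  have hx0v : x0 ⬝ᵥ Q.mulVec x0 = a0 := by
    rw [hx0Qx, hx0r, ha0def]
    field_simp
  -- key identity
  have key : ∀ x : Fin n → ℝ, p ⬝ᵥ x = r0 →
      x ⬝ᵥ Q.mulVec x = (x - x0) ⬝ᵥ Q.mulVec (x - x0) + a0 := by
    intro x hx
    have expand : (x - x0) ⬝ᵥ Q.mulVec (x - x0)
        = x ⬝ᵥ Q.mulVec x - 2 * (x0 ⬝ᵥ Q.mulVec x) + x0 ⬝ᵥ Q.mulVec x0 := by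
      rw [Matrix.mulVec_sub]
      simp only [dotProduct_sub, sub_dotProduct, hsym x x0]
      ring
    rw [expand, hx0v, hx0Qx, hx, ha0def]
    field_simp
    ring
  have hzero : ∀ z : Fin n → ℝ, z ⬝ᵥ Q.mulVec z = 0 → z = 0 := by
    intro z hz
    by_contra h
    have := hQ.dotProduct_mulVec_pos h
    simp only [star_trivial] at this
    linarith
  have hnonneg : ∀ z : Fin n → ℝ, 0 ≤ z ⬝ᵥ Q.mulVec z := by
    intro z
    have := hQ.posSemidef.dotProduct_mulVec_nonneg z
    simpa using this
  refine ⟨?_, ?_, ?_⟩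
  · -- a = a0
    intro ha
    ext x
    simp only [Set.mem_setOf_eq, Set.mem_singleton_iff]
    constructor
    · rintro ⟨hv, hr⟩
      have h0 : (x - x0) ⬝ᵥ Q.mulVec (x - x0) = 0 := by
        have := key x hr
        rw [hv, ha] at this
        linarith
      have := hzero _ h0
      have : x = x0 := by
        have hx := sub_eq_zero.mp this
        exact hx
      rw [this, hx0def]
    · rintro rfl
      exact ⟨by rw [hx0v, ha], hx0r⟩
  · -- a > a0
    intro ha
    obtain ⟨i, hpi⟩ := Function.ne_iff.mp hp
    simp only [Pi.zero_apply] at hpi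
    obtain ⟨j, hji⟩ := Fintype.exists_ne_of_one_lt_card (by rw [Fintype.card_fin]; omega) i
    set w : Fin n → ℝ := fun k => p i * (if k = j then 1 else 0) - p j * (if k = i then 1 else 0)
      with hwdef
    have hwj : w j = p i := by simp [hwdef, hji]
    have hwne : w ≠ 0 := by
      intro h
      apply hpi
      rw [← hwj, h]; rfl
    have hpw : p ⬝ᵥ w = 0 := by
      simp only [dotProduct, hwdef, mul_sub, mul_ite, mul_one, mul_zero,
        Finset.sum_sub_distrib, Finset.sum_ite_eq', Finset.mem_univ, if_true]
      ring
    set b : ℝ := w ⬝ᵥ Q.mulVec w with hbdef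
    have hb : 0 < b := by
      have := hQ.dotProduct_mulVec_pos hwne
      simpa using this
    set t : ℝ := Real.sqrt ((a - a0) / b) with htdef
    have ht : 0 < t := Real.sqrt_pos.mpr (div_pos (by linarith) hb)
    have ht2 : t ^ 2 = (a - a0) / b := by
      rw [htdef, sq, Real.mul_self_sqrt (div_pos (by linarith) hb).le]
    -- the two points
    have hpt : ∀ s : ℝ, p ⬝ᵥ (x0 + s • w) = r0 := by
      intro s
      simp [dotProduct_add, dotProduct_smul, hpw, hx0r, smul_eq_mul]
    have aux : ∀ u v : Fin n → ℝ, (u + v) ⬝ᵥ Q.mulVec (u + v)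
        = u ⬝ᵥ Q.mulVec u + u ⬝ᵥ Q.mulVec v + v ⬝ᵥ Q.mulVec u + v ⬝ᵥ Q.mulVec v := by
      intro u v
      rw [Matrix.mulVec_add, dotProduct_add, add_dotProduct, add_dotProduct]
      ring
    have hvpt : ∀ s : ℝ, (x0 + s • w) ⬝ᵥ Q.mulVec (x0 + s • w) = a0 + s ^ 2 * b := by
      intro s
      have hx0w : x0 ⬝ᵥ Q.mulVec w = 0 := by rw [hx0Qx, hpw, mul_zero]
      have hwx0 : w ⬝ᵥ Q.mulVec x0 = 0 := by rw [hsym, hx0w]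
      have h1 : x0 ⬝ᵥ Q.mulVec (s • w) = 0 := by
        rw [Matrix.mulVec_smul, dotProduct_smul, hx0w, smul_zero]
      have h2 : (s • w) ⬝ᵥ Q.mulVec x0 = 0 := by
        rw [smul_dotProduct, hwx0, smul_zero]
      have h3 : (s • w) ⬝ᵥ Q.mulVec (s • w) = s ^ 2 * b := by
        rw [Matrix.mulVec_smul, dotProduct_smul, smul_dotProduct, ← hbdef,
          smul_eq_mul, smul_eq_mul]
        ring
      rw [aux, hx0v, h1, h2, h3]
      ring
    have hmem : ∀ s : ℝ, s ^ 2 = (a - a0) / b →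
        (x0 + s • w) ∈ {x : Fin n → ℝ | x ⬝ᵥ Q.mulVec x = a ∧ p ⬝ᵥ x = r0} := by
      intro s hs
      refine ⟨?_, hpt s⟩
      rw [hvpt, hs]
      field_simp
      ring
    have hm1 := hmem t ht2
    have hm2 := hmem (-t) (by rw [neg_sq, ht2])
    refine ⟨⟨_, hm1⟩, _, hm1, _, hm2, ?_⟩
    intro h
    have hj := congrFun h j
    simp only [Pi.add_apply, Pi.smul_apply, smul_eq_mul, hwj] at hj
    have : t * p i = 0 := by nlinarith [hj]
    rcases mul_eq_zero.mp this with h' | h'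
    · exact ht.ne' h'
    · exact hpi h'
  · -- a < a0
    intro ha
    ext x
    simp only [Set.mem_setOf_eq, Set.mem_empty_iff_false, iff_false, not_and]
    intro hv hr
    have := key x hr
    have h0 := hnonneg (x - x0)
    rw [hv] at this
    linarith
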